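/- Let G be a strongly connected signed digraph that is weight balanced, i.e., Σ_j |a_ij| = Σ_j |a_ji| for every i. Then there exists a real number α > 0 such that det(L̄_11) = det(L̄_22) = … = det(L̄_nn) = α, and consequently for every x ∈ ℝⁿ, Φ_e(x) = α·Σ_{i=1}^n Σ_{j=1}^n |a_ij|·(x_i − sgn(a_ij)·x_j)² = α·xᵀ(L + Lᵀ)x. -/

import Mathlib

open Matrix BigOperators Filter

/-- In-degree of node `i`: sum of absolute values of the `i`-th row of `A`. -/
noncomputable def inDeg {n : ℕ} (A : Matrix (Fin n) (Fin n) ℝ) (i : Fin n) : ℝ := ∑ j, |A i j|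

/-- Laplacian `L = Δ − A` of the signed digraph with adjacency matrix `A`. -/
noncomputable def lapOf {n : ℕ} (A : Matrix (Fin n) (Fin n) ℝ) : Matrix (Fin n) (Fin n) ℝ :=
  Matrix.diagonal (inDeg A) - A

/-- Laplacian `L̄ = Δ − Ā` of the induced unsigned digraph. -/
noncomputable def lapBar {n : ℕ} (A : Matrix (Fin n) (Fin n) ℝ) : Matrix (Fin n) (Fin n) ℝ :=
  Matrix.diagonal (inDeg A) - Matrix.of (fun i j => |A i j|)

/-- `det(L̄_ii)`: determinant of `L̄` with its `i`-th row and column removed. -/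
noncomputable def minorDet {n : ℕ} (A : Matrix (Fin n) (Fin n) ℝ) (i : Fin n) : ℝ :=
  Matrix.det ((lapBar A).submatrix (fun k : {j : Fin n // j ≠ i} => (k : Fin n))
    (fun k : {j : Fin n // j ≠ i} => (k : Fin n)))

/-- `W = diag(det(L̄_11), …, det(L̄_nn))`. -/
noncomputable def Wmat {n : ℕ} (A : Matrix (Fin n) (Fin n) ℝ) : Matrix (Fin n) (Fin n) ℝ :=
  Matrix.diagonal (minorDet A)

/-- Mirror adjacency matrix `Â = (W·A + Aᵀ·W)/2`. -/
noncomputable def mirrorAdj {n : ℕ} (A : Matrix (Fin n) (Fin n) ℝ) : Matrix (Fin n) (Fin n) ℝ :=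
  (1/2 : ℝ) • (Wmat A * A + Aᵀ * Wmat A)

/-- Mirror Laplacian `L̂ = (W·L + Lᵀ·W)/2`. -/
noncomputable def mirrorLap {n : ℕ} (A : Matrix (Fin n) (Fin n) ℝ) : Matrix (Fin n) (Fin n) ℝ :=
  (1/2 : ℝ) • (Wmat A * lapOf A + (lapOf A)ᵀ * Wmat A)

/-- `(j, i)` is a directed edge when `a_ij ≠ 0`; strong connectivity: a directed
path between every ordered pair of distinct nodes. -/
def StronglyConnected {n : ℕ} (A : Matrix (Fin n) (Fin n) ℝ) : Prop :=
  ∀ i j : Fin n, i ≠ j → Relation.TransGen (fun u v => A v u ≠ 0) i j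

/-- `σ` is the diagonal of a gauge transformation: each entry is `±1`. -/
def IsGauge {n : ℕ} (σ : Fin n → ℝ) : Prop := ∀ i, σ i = 1 ∨ σ i = -1

/-- Structural balance: there is a gauge transformation `D = diag σ` with all entries
of `D·A·D` (entrywise `σ i * A i j * σ j`) nonnegative. -/
def StructBalanced {n : ℕ} (A : Matrix (Fin n) (Fin n) ℝ) : Prop :=
  ∃ σ : Fin n → ℝ, IsGauge σ ∧ ∀ i j, 0 ≤ σ i * A i j * σ j

/-- Improved Laplacian potential function
`Φ_e(x) = Σ_i Σ_j det(L̄_ii)·|a_ij|·(x_i − sgn(a_ij)·x_j)²`. -/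
noncomputable def PhiE {n : ℕ} (A : Matrix (Fin n) (Fin n) ℝ) (x : Fin n → ℝ) : ℝ :=
  ∑ i, ∑ j, minorDet A i * |A i j| * (x i - Real.sign (A i j) * x j) ^ 2

section AuxLemmas

variable {n : ℕ} (A : Matrix (Fin n) (Fin n) ℝ)

lemma lapBar_apply (i j : Fin n) :
    lapBar A i j = (if i = j then inDeg A i else 0) - |A i j| := by
  simp [lapBar, Matrix.diagonal_apply]

lemma lapBar_mulVec (x : Fin n → ℝ) (i : Fin n) :
    (lapBar A *ᵥ x) i = ∑ j, |A i j| * (x i - x j) := by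
  have h : (lapBar A *ᵥ x) i = inDeg A i * x i - ∑ j, |A i j| * x j := by
    simp only [Matrix.mulVec, dotProduct, lapBar_apply, sub_mul, ite_mul, zero_mul,
      Finset.sum_sub_distrib, Finset.sum_ite_eq, Finset.mem_univ, if_true]
  rw [h, inDeg, Finset.sum_mul, ← Finset.sum_sub_distrib]
  exact Finset.sum_congr rfl fun j _ => by ring

lemma lapBar_vecMul (hwb : ∀ i, ∑ j, |A i j| = ∑ j, |A j i|) (x : Fin n → ℝ) (j : Fin n) :
    (x ᵥ* lapBar A) j = ∑ i, |A i j| * (x j - x i) := by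
  have h : (x ᵥ* lapBar A) j = inDeg A j * x j - ∑ i, x i * |A i j| := by
    simp only [Matrix.vecMul, dotProduct, lapBar_apply, mul_sub, mul_ite, mul_zero,
      Finset.sum_sub_distrib, Finset.sum_ite_eq', Finset.mem_univ, if_true, mul_comm]
  have h2 : inDeg A j = ∑ i, |A i j| := hwb j
  rw [h, h2, Finset.sum_mul, ← Finset.sum_sub_distrib]
  exact Finset.sum_congr rfl fun i _ => by ring

lemma reach_back {S : Set (Fin n)} (hS : ∀ v ∈ S, ∀ u, A v u ≠ 0 → u ∈ S)
    {a b : Fin n} (h : Relation.TransGen (fun u v => A v u ≠ 0) a b) (hb : b ∈ S) : a ∈ S := by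
  induction h using Relation.TransGen.head_induction_on with
  | single h => exact hS _ hb _ h
  | head h _ ih => exact hS _ ih _ h

lemma reach_fwd {S : Set (Fin n)} (hS : ∀ v ∈ S, ∀ u, A u v ≠ 0 → u ∈ S)
    {a b : Fin n} (h : Relation.TransGen (fun u v => A v u ≠ 0) a b) (ha : a ∈ S) : b ∈ S := by
  induction h with
  | single h => exact hS _ ha _ h
  | tail _ h ih => exact hS _ ih _ h


lemma kernel_const (hn : 2 ≤ n) (hsc : StronglyConnected A)
    {x : Fin n → ℝ} (hx : lapBar A *ᵥ x = 0) (i j : Fin n) : x i = x j := by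
  have hpos : 0 < n := by omega
  obtain ⟨i0, -, hi0⟩ := Finset.exists_max_image (Finset.univ : Finset (Fin n)) x
    ⟨⟨0, hpos⟩, Finset.mem_univ _⟩
  set S : Set (Fin n) := {u | x u = x i0} with hSdef
  have hS : ∀ v ∈ S, ∀ u, A v u ≠ 0 → u ∈ S := by
    intro v hv u hu
    have hrow : ∑ k, |A v k| * (x v - x k) = 0 := by
      rw [← lapBar_mulVec A x v, hx]; rfl
    have hnn : ∀ k ∈ Finset.univ, 0 ≤ |A v k| * (x v - x k) := by
      intro k _
      have : x k ≤ x v := by rw [hv]; exact hi0 k (Finset.mem_univ k)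
      exact mul_nonneg (abs_nonneg _) (by linarith)
    have := (Finset.sum_eq_zero_iff_of_nonneg hnn).mp hrow u (Finset.mem_univ u)
    have habs : |A v u| ≠ 0 := fun h => hu (abs_eq_zero.mp h)
    have : x v - x u = 0 := by
      rcases mul_eq_zero.mp this with h | h
      · exact absurd h habs
      · exact h
    have hxu : x u = x v := by linarith
    show x u = x i0
    rw [hxu, hv]
  have hall : ∀ a, a ∈ S := by
    intro a
    by_cases ha : a = i0
    · subst ha; rfl
    · exact reach_back A hS (hsc a i0 ha) rfl
  have := hall i
  have := hall j
  rw [hall i, hall j]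

lemma kernel_const_left (hn : 2 ≤ n) (hsc : StronglyConnected A)
    (hwb : ∀ i, ∑ j, |A i j| = ∑ j, |A j i|)
    {x : Fin n → ℝ} (hx : x ᵥ* lapBar A = 0) (i j : Fin n) : x i = x j := by
  have hpos : 0 < n := by omega
  obtain ⟨i0, -, hi0⟩ := Finset.exists_max_image (Finset.univ : Finset (Fin n)) x
    ⟨⟨0, hpos⟩, Finset.mem_univ _⟩
  set S : Set (Fin n) := {u | x u = x i0} with hSdef
  have hS : ∀ v ∈ S, ∀ u, A u v ≠ 0 → u ∈ S := by
    intro v hv u hu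
    have hrow : ∑ k, |A k v| * (x v - x k) = 0 := by
      rw [← lapBar_vecMul A hwb x v, hx]; rfl
    have hnn : ∀ k ∈ Finset.univ, 0 ≤ |A k v| * (x v - x k) := by
      intro k _
      have : x k ≤ x v := by rw [hv]; exact hi0 k (Finset.mem_univ k)
      exact mul_nonneg (abs_nonneg _) (by linarith)
    have := (Finset.sum_eq_zero_iff_of_nonneg hnn).mp hrow u (Finset.mem_univ u)
    have habs : |A u v| ≠ 0 := fun h => hu (abs_eq_zero.mp h)
    have : x v - x u = 0 := by
      rcases mul_eq_zero.mp this with h | h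
      · exact absurd h habs
      · exact h
    have hxu : x u = x v := by linarith
    show x u = x i0
    rw [hxu, hv]
  have hall : ∀ a, a ∈ S := by
    intro a
    by_cases ha : a = i0
    · subst ha; rfl
    · exact reach_fwd A hS (hsc i0 a (fun h => ha h.symm)) rfl
  rw [hall i, hall j]

lemma det_lapBar_zero (hn : 2 ≤ n) : (lapBar A).det = 0 := by
  rw [← Matrix.exists_mulVec_eq_zero_iff]
  refine ⟨fun _ => 1, ?_, ?_⟩
  · intro h
    have hpos : 0 < n := by omega
    have := congrFun h ⟨0, hpos⟩
    simp at this
  · funext i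
    rw [lapBar_mulVec]
    simp

lemma adjugate_diag_const (hn : 2 ≤ n) (hsc : StronglyConnected A)
    (hwb : ∀ i, ∑ j, |A i j| = ∑ j, |A j i|) (i j : Fin n) :
    (lapBar A).adjugate i i = (lapBar A).adjugate j j := by
  have hdet := det_lapBar_zero A hn
  have hcol : ∀ k a b : Fin n, (lapBar A).adjugate a k = (lapBar A).adjugate b k := by
    intro k a b
    have hker : lapBar A *ᵥ (fun l => (lapBar A).adjugate l k) = 0 := by
      funext m
      have := congrFun (congrFun (Matrix.mul_adjugate (lapBar A)) m) k
      simp only [Matrix.mul_apply, hdet, zero_smul, Matrix.zero_apply] at this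
      simpa [Matrix.mulVec, dotProduct] using this
    exact kernel_const A hn hsc hker a b
  have hrow : ∀ k a b : Fin n, (lapBar A).adjugate k a = (lapBar A).adjugate k b := by
    intro k a b
    have hker : (fun l => (lapBar A).adjugate k l) ᵥ* lapBar A = 0 := by
      funext m
      have := congrFun (congrFun (Matrix.adjugate_mul (lapBar A)) k) m
      simp only [Matrix.mul_apply, hdet, zero_smul, Matrix.zero_apply] at this
      simpa [Matrix.vecMul, dotProduct] using this
    exact kernel_const_left A hn hsc hwb hker a b
  calc (lapBar A).adjugate i i = (lapBar A).adjugate j i := hcol i i j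
    _ = (lapBar A).adjugate j j := hrow j i j

lemma adjugate_diag_eq (M : Matrix (Fin n) (Fin n) ℝ) (i : Fin n) :
    M.adjugate i i =
      Matrix.det (M.submatrix (fun k : {j : Fin n // j ≠ i} => (k : Fin n))
        (fun k : {j : Fin n // j ≠ i} => (k : Fin n))) := by
  classical
  rw [Matrix.adjugate_apply]
  let e : {j : Fin n // j = i} ⊕ {j : Fin n // ¬ j = i} ≃ Fin n := Equiv.sumCompl (· = i)
  rw [← Matrix.det_submatrix_equiv_self e]
  have hblock : (M.updateRow i (Pi.single i 1)).submatrix e e =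
      Matrix.fromBlocks 1 0
        (Matrix.of fun (a : {j : Fin n // ¬ j = i}) (b : {j : Fin n // j = i}) => M a.1 b.1)
        (M.submatrix (fun k : {j : Fin n // ¬ j = i} => (k : Fin n))
          (fun k : {j : Fin n // ¬ j = i} => (k : Fin n))) := by
    ext a b
    cases a with
    | inl a =>
      cases b with
      | inl b =>
        have ha : (a : Fin n) = i := a.2
        have hb : (b : Fin n) = i := b.2
        have hab : a = b := Subtype.ext (ha.trans hb.symm)
        simp [e, Matrix.submatrix_apply, ha, hb, hab, Pi.single_apply, Matrix.one_apply]
      | inr b =>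
        have ha : (a : Fin n) = i := a.2
        have hb : (b : Fin n) ≠ i := b.2
        simp [e, Matrix.submatrix_apply, ha, Pi.single_apply, hb]
    | inr a =>
      have ha : (a : Fin n) ≠ i := a.2
      cases b with
      | inl b => simp [e, Matrix.submatrix_apply, Matrix.updateRow_apply, ha]
      | inr b => simp [e, Matrix.submatrix_apply, Matrix.updateRow_apply, ha]
  rw [hblock, Matrix.det_fromBlocks_zero₁₂, Matrix.det_one, one_mul]

lemma sum_split (i : Fin n) (f : Fin n → ℝ) :
    ∑ j, f j = f i + ∑ u : {j : Fin n // j ≠ i}, f u.1 := by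
  classical
  rw [← Finset.add_sum_erase Finset.univ f (Finset.mem_univ i)]
  congr 1
  rw [Finset.sum_subtype (p := fun j => j ≠ i) (Finset.univ.erase i)
    (fun x => by simp [Finset.mem_erase])]

lemma minor_nonpos (hn : 2 ≤ n) (hsc : StronglyConnected A) (i : Fin n) {t : ℝ} (ht : 0 ≤ t)
    {y : {j : Fin n // j ≠ i} → ℝ}
    (hy : ((lapBar A).submatrix (fun k : {j : Fin n // j ≠ i} => (k : Fin n))
        (fun k : {j : Fin n // j ≠ i} => (k : Fin n)) + t • 1) *ᵥ y = 0)
    (v : {j : Fin n // j ≠ i}) : y v ≤ 0 := by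
  classical
  by_contra hvpos
  push_neg at hvpos
  -- maximizer
  obtain ⟨v0, -, hv0⟩ := Finset.exists_max_image (Finset.univ : Finset {j : Fin n // j ≠ i}) y
    ⟨v, Finset.mem_univ _⟩
  have hm : 0 < y v0 := lt_of_lt_of_le hvpos (hv0 v (Finset.mem_univ _))
  set m := y v0 with hmdef
  set S : Set (Fin n) := {u | ∃ h : u ≠ i, y ⟨u, h⟩ = m} with hSdef
  -- row equation in convenient form
  have hrowEq : ∀ w : {j : Fin n // j ≠ i},
      t * y w + inDeg A w.1 * y w - ∑ u : {j : Fin n // j ≠ i}, |A w.1 u.1| * y u = 0 := by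
    intro w
    have := congrFun hy w
    simp only [Matrix.mulVec, dotProduct, Matrix.add_apply, Matrix.submatrix_apply,
      Matrix.smul_apply, Matrix.one_apply, lapBar_apply, Pi.zero_apply, smul_eq_mul] at this
    have hrw : ∀ u : {j : Fin n // j ≠ i},
        ((if (w : Fin n) = (u : Fin n) then inDeg A w.1 else 0) - |A w.1 u.1|
          + t * (if w = u then 1 else 0)) * y u
        = (if w = u then (inDeg A w.1 + t) * y u else 0) - |A w.1 u.1| * y u := by
      intro u
      by_cases h : w = u
      · simp [h]; ring
      · have h2 : (w : Fin n) ≠ (u : Fin n) := fun hh => h (Subtype.ext hh)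
        simp [h, h2]
    rw [Finset.sum_congr rfl (fun u _ => hrw u), Finset.sum_sub_distrib,
      Finset.sum_ite_eq] at this
    simp only [Finset.mem_univ, if_true] at this
    linarith [this]
  -- closure of S
  have hS : ∀ w ∈ S, ∀ u, A w u ≠ 0 → u ∈ S := by
    intro w hw u hu
    obtain ⟨hwne, hwm⟩ := hw
    have heq := hrowEq ⟨w, hwne⟩
    rw [hwm] at heq
    have hsplit : inDeg A w = |A w i| + ∑ u : {j : Fin n // j ≠ i}, |A w u.1| := by
      rw [inDeg, sum_split i]
    have key : t * m + |A w i| * m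
        + ∑ u : {j : Fin n // j ≠ i}, |A w u.1| * (m - y u) = 0 := by
      rw [Finset.sum_congr rfl (fun u (_ : u ∈ Finset.univ) => (mul_sub (|A w u.1|) m (y u))),
        Finset.sum_sub_distrib, ← Finset.sum_mul]
      nlinarith [heq, hsplit]
    have h1 : 0 ≤ t * m := mul_nonneg ht hm.le
    have h2 : 0 ≤ |A w i| * m := mul_nonneg (abs_nonneg _) hm.le
    have hnn : ∀ u ∈ (Finset.univ : Finset {j : Fin n // j ≠ i}),
        0 ≤ |A w u.1| * (m - y u) := by
      intro u _
      exact mul_nonneg (abs_nonneg _) (by linarith [hv0 u (Finset.mem_univ u)])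
    have h3 : 0 ≤ ∑ u : {j : Fin n // j ≠ i}, |A w u.1| * (m - y u) :=
      Finset.sum_nonneg hnn
    have hAwi : |A w i| * m = 0 := by linarith
    have hsum0 : ∑ u : {j : Fin n // j ≠ i}, |A w u.1| * (m - y u) = 0 := by linarith
    have hune : u ≠ i := by
      intro hui
      subst hui
      have : |A w u| = 0 := by
        rcases mul_eq_zero.mp hAwi with h | h
        · exact h
        · exact absurd h hm.ne'
      exact hu (abs_eq_zero.mp this)
    have := (Finset.sum_eq_zero_iff_of_nonneg hnn).mp hsum0 ⟨u, hune⟩ (Finset.mem_univ _)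
    have hym : y ⟨u, hune⟩ = m := by
      rcases mul_eq_zero.mp this with h | h
      · exact absurd h (fun hh => hu (abs_eq_zero.mp hh))
      · linarith
    exact ⟨hune, hym⟩
  -- i would be in S: contradiction
  have hv0S : (v0 : Fin n) ∈ S := ⟨v0.2, by simp [hmdef]⟩
  have hiS : i ∈ S := reach_back A hS (hsc i v0.1 (fun h => v0.2 h.symm)) hv0S
  obtain ⟨h, -⟩ := hiS
  exact h rfl

lemma minor_ker (hn : 2 ≤ n) (hsc : StronglyConnected A) (i : Fin n) {t : ℝ} (ht : 0 ≤ t) :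
    (((lapBar A).submatrix (fun k : {j : Fin n // j ≠ i} => (k : Fin n))
        (fun k : {j : Fin n // j ≠ i} => (k : Fin n)) + t • 1)).det ≠ 0 := by
  intro hdet
  obtain ⟨y, hy0, hy⟩ := Matrix.exists_mulVec_eq_zero_iff.mpr hdet
  have h1 : ∀ v, y v ≤ 0 := minor_nonpos A hn hsc i ht hy
  have h2 : ∀ v, (-y) v ≤ 0 := by
    refine minor_nonpos A hn hsc i ht ?_
    rw [Matrix.mulVec_neg, hy, neg_zero]
  exact hy0 (funext fun v => le_antisymm (h1 v) (by simpa using h2 v))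

lemma nonempty_ne (hn : 2 ≤ n) (i : Fin n) : Nonempty {j : Fin n // j ≠ i} := by
  by_cases h : i = ⟨0, by omega⟩
  · exact ⟨⟨⟨1, by omega⟩, by simp [h, Fin.ext_iff]⟩⟩
  · exact ⟨⟨⟨0, by omega⟩, fun hh => h (by simp [← hh])⟩⟩

lemma eval_det_eq {m : Type*} [Fintype m] [DecidableEq m] (B : Matrix m m ℝ) (t : ℝ) :
    Polynomial.eval t (Matrix.charpoly (-B)) = (t • (1 : Matrix m m ℝ) + B).det := by
  rw [Matrix.charpoly, ← Polynomial.coe_evalRingHom, RingHom.map_det]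
  congr 1
  ext v u
  by_cases h : v = u <;>
    simp [Matrix.charmatrix_apply, Matrix.map_apply, Matrix.diagonal_apply, h,
      Matrix.one_apply, Matrix.smul_apply]

lemma minorDet_pos (hn : 2 ≤ n) (hsc : StronglyConnected A) (i : Fin n) :
    0 < minorDet A i := by
  classical
  set B := (lapBar A).submatrix (fun k : {j : Fin n // j ≠ i} => (k : Fin n))
      (fun k : {j : Fin n // j ≠ i} => (k : Fin n)) with hB
  set p := Matrix.charpoly (-B) with hp
  have hne : ∀ t : ℝ, 0 ≤ t → Polynomial.eval t p ≠ 0 := by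
    intro t ht
    rw [hp, eval_det_eq, add_comm]
    exact minor_ker A hn hsc i ht
  have hmonic : p.Monic := Matrix.charpoly_monic _
  have hcard : 0 < Fintype.card {j : Fin n // j ≠ i} :=
    Fintype.card_pos_iff.mpr (nonempty_ne hn i)
  have hdeg : 0 < p.natDegree := by
    rw [hp, Matrix.charpoly_natDegree_eq_dim]; exact hcard
  have hdeg' : 0 < p.degree := Polynomial.natDegree_pos_iff_degree_pos.mp hdeg
  have htend : Tendsto (fun t => Polynomial.eval t p) atTop atTop :=
    p.tendsto_atTop_of_leadingCoeff_nonneg hdeg' (by rw [hmonic.leadingCoeff]; norm_num)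
  obtain ⟨T, hT1, hT2⟩ := ((htend.eventually_gt_atTop 0).and (eventually_ge_atTop (0:ℝ))).exists
  have h0 : Polynomial.eval 0 p ≠ 0 := hne 0 le_rfl
  have h0pos : 0 < Polynomial.eval 0 p := by
    rcases h0.lt_or_gt with hlt | hgt
    · exfalso
      obtain ⟨c, hc, hc0⟩ := intermediate_value_Icc hT2 (p.continuous_aeval).continuousOn
        ⟨hlt.le, hT1.le⟩
      exact hne c hc.1 hc0
    · exact hgt
  have : minorDet A i = Polynomial.eval 0 p := by
    rw [hp, eval_det_eq, zero_smul, zero_add, minorDet, hB]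
  rw [this]; exact h0pos

lemma sq_expand (a xi xj : ℝ) :
    |a| * (xi - Real.sign a * xj) ^ 2 = |a| * xi ^ 2 + |a| * xj ^ 2 - 2 * (a * (xi * xj)) := by
  rcases lt_trichotomy a 0 with h | h | h
  · rw [Real.sign_of_neg h, abs_of_neg h]; ring
  · subst h; simp [Real.sign_zero]
  · rw [Real.sign_of_pos h, abs_of_pos h]; ring

lemma quad_form {n : ℕ} (A : Matrix (Fin n) (Fin n) ℝ)
    (hwb : ∀ i, ∑ j, |A i j| = ∑ j, |A j i|) (x : Fin n → ℝ) :
    ∑ i, ∑ j, |A i j| * (x i - Real.sign (A i j) * x j) ^ 2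
      = x ⬝ᵥ ((lapOf A + (lapOf A)ᵀ) *ᵥ x) := by
  have lhs : ∑ i, ∑ j, |A i j| * (x i - Real.sign (A i j) * x j) ^ 2
      = (∑ i, inDeg A i * x i ^ 2) + (∑ i, inDeg A i * x i ^ 2)
        - 2 * ∑ i, ∑ j, A i j * (x i * x j) := by
    rw [Finset.sum_congr rfl fun i _ => Finset.sum_congr rfl fun j _ => sq_expand (A i j) (x i) (x j)]
    have e1 : ∑ i, ∑ j : Fin n, |A i j| * x i ^ 2 = ∑ i, inDeg A i * x i ^ 2 := by
      refine Finset.sum_congr rfl fun i _ => ?_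
      rw [inDeg, Finset.sum_mul]
    have e2 : ∑ i, ∑ j : Fin n, |A i j| * x j ^ 2 = ∑ i, inDeg A i * x i ^ 2 := by
      rw [Finset.sum_comm]
      refine Finset.sum_congr rfl fun j _ => ?_
      rw [inDeg, hwb j, Finset.sum_mul]
    calc ∑ i, ∑ j, (|A i j| * x i ^ 2 + |A i j| * x j ^ 2 - 2 * (A i j * (x i * x j)))
        = (∑ i, ∑ j : Fin n, |A i j| * x i ^ 2) + (∑ i, ∑ j : Fin n, |A i j| * x j ^ 2)
          - 2 * ∑ i, ∑ j, A i j * (x i * x j) := by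
          simp only [Finset.sum_sub_distrib, Finset.sum_add_distrib, Finset.mul_sum]
      _ = _ := by rw [e1, e2]
  have rhs : x ⬝ᵥ ((lapOf A + (lapOf A)ᵀ) *ᵥ x)
      = (∑ i, inDeg A i * x i ^ 2) + (∑ i, inDeg A i * x i ^ 2)
        - 2 * ∑ i, ∑ j, A i j * (x i * x j) := by
    have expand : x ⬝ᵥ ((lapOf A + (lapOf A)ᵀ) *ᵥ x)
        = ∑ i, ∑ j, (x i * ((lapOf A i j + lapOf A j i) * x j)) := by
      simp only [dotProduct, Matrix.mulVec, Matrix.add_apply, Matrix.transpose_apply,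
        Finset.mul_sum]
    rw [expand]
    have lap : ∀ i j, lapOf A i j = (if i = j then inDeg A i else 0) - A i j := by
      intro i j; simp [lapOf, Matrix.diagonal_apply]
    have pointwise : ∀ i j, x i * ((lapOf A i j + lapOf A j i) * x j)
        = ((if i = j then inDeg A i * (x i * x j) else 0)
            + (if j = i then inDeg A j * (x i * x j) else 0))
          - (A i j * (x i * x j) + A j i * (x i * x j)) := by
      intro i j
      rw [lap i j, lap j i]
      by_cases h : i = j
      · subst h; simp; ring
      · have h2 : ¬ j = i := fun hh => h hh.symm
        simp [h, h2]; ring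
    rw [Finset.sum_congr rfl fun i _ => Finset.sum_congr rfl fun j _ => pointwise i j]
    simp only [Finset.sum_sub_distrib, Finset.sum_add_distrib, Finset.sum_ite_eq,
      Finset.sum_ite_eq', Finset.mem_univ, if_true]
    have swap : ∑ i, ∑ j, A j i * (x i * x j) = ∑ i, ∑ j, A i j * (x i * x j) := by
      rw [Finset.sum_comm]
      exact Finset.sum_congr rfl fun i _ => Finset.sum_congr rfl fun j _ => by ring
    rw [swap]
    have hsq : ∑ i, inDeg A i * (x i * x i) = ∑ i, inDeg A i * x i ^ 2 :=
      Finset.sum_congr rfl fun i _ => by ring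
    rw [hsq]
    ring
  rw [lhs, rhs]

end AuxLemmas

/-- on a strongly connected weight-balanced signed digraph, all the
minor determinants are equal to some `α > 0`, and `Φ_e(x) = α·xᵀ(L + Lᵀ)x`. -/
theorem phiE_weight_balanced (n : ℕ) (hn : 2 ≤ n)
    (A : Matrix (Fin n) (Fin n) ℝ)
    (hdiag : ∀ i, A i i = 0) (hdigon : ∀ i j, 0 ≤ A i j * A j i)
    (hsc : StronglyConnected A)
    (hwb : ∀ i, ∑ j, |A i j| = ∑ j, |A j i|) :
    ∃ α : ℝ, 0 < α ∧ (∀ i, minorDet A i = α) ∧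
      (∀ x : Fin n → ℝ,
        PhiE A x = α * ∑ i, ∑ j, |A i j| * (x i - Real.sign (A i j) * x j) ^ 2) ∧
      (∀ x : Fin n → ℝ,
        PhiE A x = α * (x ⬝ᵥ ((lapOf A + (lapOf A)ᵀ) *ᵥ x))) := by
  have hpos : 0 < n := by omega
  set i0 : Fin n := ⟨0, hpos⟩ with hi0
  have hmd : ∀ k, minorDet A k = Matrix.adjugate (lapBar A) k k :=
    fun k => (adjugate_diag_eq (lapBar A) k).symm
  have key : ∀ i, minorDet A i = minorDet A i0 := by
    intro i
    rw [hmd i, hmd i0, adjugate_diag_const A hn hsc hwb i i0]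
  have h3 : ∀ x : Fin n → ℝ,
      PhiE A x = minorDet A i0 * ∑ i, ∑ j, |A i j| * (x i - Real.sign (A i j) * x j) ^ 2 := by
    intro x
    simp only [PhiE, key, mul_assoc, ← Finset.mul_sum]
  exact ⟨minorDet A i0, minorDet_pos A hn hsc i0, key, h3,
    fun x => by rw [h3 x, quad_form A hwb x]⟩
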